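/- Let n ≥ 2, let a, b ∈ ℂ with |a| = 1 and |a + n·b| = 1, and let U = a·I + b·J (so U is unitary). Then for every real k > 0 there exist complex numbers a(k), b(k) such that the scattering matrix satisfies S(k) = a(k)·I + b(k)·J; in particular S(k) is permutation-symmetric for every k > 0. -/

import Mathlib

open Matrix

theorem stmt_9 (n : ℕ) (hn : 2 ≤ n) (a b : ℂ)
    (ha : ‖a‖ = 1) (hab : ‖a + n * b‖ = 1)
    (U : Matrix (Fin n) (Fin n) ℂ)
    (hU : U = a • (1 : Matrix (Fin n) (Fin n) ℂ) + b • Matrix.of (fun _ _ => (1 : ℂ))) :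
    ∀ k : ℝ, 0 < k →
      ∃ ak bk : ℂ,
        (((k : ℂ) - 1) • U + ((k : ℂ) + 1) • (1 : Matrix (Fin n) (Fin n) ℂ))⁻¹ *
            (((k : ℂ) + 1) • U + ((k : ℂ) - 1) • (1 : Matrix (Fin n) (Fin n) ℂ)) =
          ak • (1 : Matrix (Fin n) (Fin n) ℂ) + bk • Matrix.of (fun _ _ => (1 : ℂ)) := by
  intro k hk
  set J : Matrix (Fin n) (Fin n) ℂ := Matrix.of (fun _ _ => (1 : ℂ)) with hJdef
  have hJJ : J * J = (n : ℂ) • J := by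
    ext i j
    simp [hJdef, Matrix.mul_apply]
  have hmul : ∀ x y x' y' : ℂ,
      (x • (1 : Matrix (Fin n) (Fin n) ℂ) + y • J) * (x' • 1 + y' • J)
        = (x * x') • (1 : Matrix (Fin n) (Fin n) ℂ)
            + (x * y' + y * x' + n * y * y') • J := by
    intro x y x' y'
    rw [Matrix.add_mul, Matrix.mul_add, Matrix.mul_add]
    simp only [Matrix.smul_mul, Matrix.mul_smul, Matrix.one_mul, Matrix.mul_one, hJJ,
      smul_smul]
    module
  have key : ∀ z : ℂ, ‖z‖ = 1 → ((k : ℂ) - 1) * z + ((k : ℂ) + 1) ≠ 0 := by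
    intro z hz h
    have h2 : ((k : ℂ) - 1) * z = -((k : ℂ) + 1) := by linear_combination h
    have h3 := congrArg (‖·‖) h2
    rw [norm_mul, hz, mul_one, norm_neg] at h3
    rw [show ((k : ℂ) - 1) = ((k - 1 : ℝ) : ℂ) by push_cast; ring,
      show ((k : ℂ) + 1) = ((k + 1 : ℝ) : ℂ) by push_cast; ring,
      Complex.norm_real, Complex.norm_real, Real.norm_eq_abs, Real.norm_eq_abs, abs_of_pos (by linarith : (0:ℝ) < k + 1)] at h3
    rcases abs_cases (k - 1) with ⟨h4, _⟩ | ⟨h4, _⟩ <;> linarith [h3 ▸ h4]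
  set α : ℂ := ((k : ℂ) - 1) * a + ((k : ℂ) + 1) with hαdef
  set β : ℂ := ((k : ℂ) - 1) * b with hβdef
  have hα : α ≠ 0 := key a ha
  have hγ : α + n * β ≠ 0 := by
    have := key (a + n * b) hab
    intro h
    exact this (by linear_combination h)
  set p : ℂ := α⁻¹ with hpdef
  set q : ℂ := -β / (α * (α + n * β)) with hqdef
  have hNM : (p • (1 : Matrix (Fin n) (Fin n) ℂ) + q • J) * (α • 1 + β • J) = 1 := by
    rw [hmul]
    have c1 : p * α = 1 := inv_mul_cancel₀ hα
    have c2 : p * β + q * α + n * q * β = 0 := by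
      have hγ' : α + β * n ≠ 0 := by rwa [mul_comm] at hγ
      rw [hpdef, hqdef]
      field_simp
      ring
    rw [c1, c2, one_smul, zero_smul, add_zero]
  have hMeq : ((k : ℂ) - 1) • U + ((k : ℂ) + 1) • (1 : Matrix (Fin n) (Fin n) ℂ)
      = α • 1 + β • J := by
    rw [hU, hαdef, hβdef]
    module
  have hM'eq : ((k : ℂ) + 1) • U + ((k : ℂ) - 1) • (1 : Matrix (Fin n) (Fin n) ℂ)
      = (((k : ℂ) + 1) * a + ((k : ℂ) - 1)) • 1 + (((k : ℂ) + 1) * b) • J := by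
    rw [hU]
    module
  have hinv : (α • (1 : Matrix (Fin n) (Fin n) ℂ) + β • J)⁻¹
      = p • 1 + q • J := Matrix.inv_eq_left_inv hNM
  refine ⟨p * (((k : ℂ) + 1) * a + ((k : ℂ) - 1)),
    p * (((k : ℂ) + 1) * b) + q * (((k : ℂ) + 1) * a + ((k : ℂ) - 1))
      + n * q * (((k : ℂ) + 1) * b), ?_⟩
  rw [hMeq, hM'eq, hinv, hmul]
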